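/- Fix a competence 1/2 < θ < 1 and a weight 0 < w < 1. The decision rule r* defined by r*(T) = 1 if and only if T is a good table is admissible, and it minimizes the loss: L_w(r*) ≤ L_w(r) for every decision rule r satisfying r(x,y,z,t) = r(x,z,y,t) for all tables (in particular, for every admissible rule r). -/

import Mathlib

def tsum4 (T : ℕ × ℕ × ℕ × ℕ) : ℕ := T.1 + T.2.1 + T.2.2.1 + T.2.2.2

def tableStep (T S : ℕ × ℕ × ℕ × ℕ) : Prop :=
  (∃ x y z t : ℕ, T = (x, y, z, t + 1) ∧ S = (x, y, z + 1, t)) ∨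
  (∃ x y z t : ℕ, T = (x, y, z, t + 1) ∧ S = (x, y + 1, z, t)) ∨
  (∃ x y z t : ℕ, T = (x, y + 1, z, t) ∧ S = (x + 1, y, z, t)) ∨
  (∃ x y z t : ℕ, T = (x, y, z + 1, t) ∧ S = (x + 1, y, z, t))

def tableLe : ℕ × ℕ × ℕ × ℕ → ℕ × ℕ × ℕ × ℕ → Prop :=
  Relation.ReflTransGen tableStep

def tables (n : ℕ) : Finset (ℕ × ℕ × ℕ × ℕ) :=
  ((Finset.range (n+1)) ×ˢ (Finset.range (n+1)) ×ˢ (Finset.range (n+1)) ×ˢ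
    (Finset.range (n+1))).filter (fun T => tsum4 T = n)

noncomputable def mcoef (n : ℕ) (T : ℕ × ℕ × ℕ × ℕ) : ℝ :=
  (n.factorial : ℝ) /
    (T.1.factorial * T.2.1.factorial * T.2.2.1.factorial * T.2.2.2.factorial)

/-- The loss `L_w(r) = w·ℙ_r(FP) + (1−w)·ℙ_r(FN)`. -/
noncomputable def loss (n : ℕ) (w θ : ℝ) (r : ℕ × ℕ × ℕ × ℕ → Fin 2) : ℝ :=
  w * ∑ T ∈ (tables n).filter (fun T => r T = 1),
        mcoef n T * θ ^ (T.1 + 2*T.2.1 + T.2.2.2) * (1-θ) ^ (T.1 + 2*T.2.2.1 + T.2.2.2)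
  + (1-w) * ∑ T ∈ (tables n).filter (fun T => r T = 0),
        mcoef n T * θ ^ (2*T.1 + T.2.1 + T.2.2.1) * (1-θ) ^ (T.2.1 + T.2.2.1 + 2*T.2.2.2)

/-- A table `(x,y,z,t)` is good (for competence `θ` and weight `w`) if
`(θ/(1−θ))^{(y−z)−(x−t)} + (θ/(1−θ))^{(z−y)−(x−t)} < 2(1−w)/w`. -/
def goodTable (θ w : ℝ) (T : ℕ × ℕ × ℕ × ℕ) : Prop :=
  (θ/(1-θ)) ^ (((T.2.1 : ℤ) - T.2.2.1) - ((T.1 : ℤ) - T.2.2.2))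
    + (θ/(1-θ)) ^ (((T.2.2.1 : ℤ) - T.2.1) - ((T.1 : ℤ) - T.2.2.2)) < 2*(1-w)/w

open Classical in
/-- The rule whose positive tables are exactly the good tables. -/
noncomputable def ruleStar (θ w : ℝ) : ℕ × ℕ × ℕ × ℕ → Fin 2 :=
  fun T => if goodTable θ w T then 1 else 0

/- auxiliary lemmas -/

lemma goodTable_swap (θ w : ℝ) (x y z t : ℕ) :
    goodTable θ w (x, y, z, t) ↔ goodTable θ w (x, z, y, t) := by
  unfold goodTable; dsimp only; rw [add_comm]

lemma sum_zpow_lt {q C : ℝ} (hq : 1 < q) {a b a' b' : ℤ} (ha : a' ≤ a) (hb : b' ≤ b)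
    (h : q ^ a + q ^ b < C) : q ^ a' + q ^ b' < C := by
  have h1 : q ^ a' ≤ q ^ a := zpow_le_zpow_right₀ hq.le ha
  have h2 : q ^ b' ≤ q ^ b := zpow_le_zpow_right₀ hq.le hb
  linarith

lemma one_lt_q {θ : ℝ} (hθ : 1/2 < θ) (hθ1 : θ < 1) : 1 < θ / (1 - θ) := by
  rw [lt_div_iff₀ (by linarith)]; linarith

lemma good_step {θ w : ℝ} (hθ : 1/2 < θ) (hθ1 : θ < 1) {T S : ℕ × ℕ × ℕ × ℕ}
    (h : tableStep T S) (hg : goodTable θ w T) : goodTable θ w S := by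
  have hq := one_lt_q hθ hθ1
  rcases h with ⟨x,y,z,t,hT,hS⟩ | ⟨x,y,z,t,hT,hS⟩ | ⟨x,y,z,t,hT,hS⟩ | ⟨x,y,z,t,hT,hS⟩ <;>
    subst hT <;> subst hS <;> unfold goodTable at hg ⊢ <;> dsimp only at hg ⊢ <;>
    refine sum_zpow_lt hq ?_ ?_ hg <;> push_cast <;> omega

lemma good_le {θ w : ℝ} (hθ : 1/2 < θ) (hθ1 : θ < 1) {T S : ℕ × ℕ × ℕ × ℕ}
    (h : tableLe T S) (hg : goodTable θ w T) : goodTable θ w S := by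
  induction h with
  | refl => exact hg
  | tail _ hstep ih => exact good_step hθ hθ1 hstep ih

noncomputable def pA (n : ℕ) (θ : ℝ) (T : ℕ × ℕ × ℕ × ℕ) : ℝ :=
  mcoef n T * θ ^ (T.1 + 2*T.2.1 + T.2.2.2) * (1-θ) ^ (T.1 + 2*T.2.2.1 + T.2.2.2)

noncomputable def pB (n : ℕ) (θ : ℝ) (T : ℕ × ℕ × ℕ × ℕ) : ℝ :=
  mcoef n T * θ ^ (2*T.1 + T.2.1 + T.2.2.1) * (1-θ) ^ (T.2.1 + T.2.2.1 + 2*T.2.2.2)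

def sw (T : ℕ × ℕ × ℕ × ℕ) : ℕ × ℕ × ℕ × ℕ := (T.1, T.2.2.1, T.2.1, T.2.2.2)

lemma mem_tables {n : ℕ} {T : ℕ × ℕ × ℕ × ℕ} : T ∈ tables n ↔ tsum4 T = n := by
  obtain ⟨x, y, z, t⟩ := T
  rw [tables, Finset.mem_filter]
  simp only [tables, tsum4, Finset.mem_filter, Finset.mem_product, Finset.mem_range]
  omega

lemma sw_mem_tables {n : ℕ} {T : ℕ × ℕ × ℕ × ℕ} (h : T ∈ tables n) : sw T ∈ tables n := by
  rw [mem_tables] at h ⊢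
  obtain ⟨x, y, z, t⟩ := T
  simp only [sw, tsum4] at h ⊢
  omega

lemma sw_sw (T : ℕ × ℕ × ℕ × ℕ) : sw (sw T) = T := rfl

lemma reindex_sw {n : ℕ} (g : (ℕ × ℕ × ℕ × ℕ) → ℝ) :
    ∑ T ∈ tables n, g T = ∑ T ∈ tables n, g (sw T) := by
  refine Finset.sum_nbij' (i := sw) (j := sw) (fun a ha => sw_mem_tables ha)
    (fun a ha => sw_mem_tables ha) (fun a _ => sw_sw a) (fun a _ => sw_sw a) ?_
  intro a _
  rw [sw_sw]

lemma mcoef_pos (n : ℕ) (T : ℕ × ℕ × ℕ × ℕ) : 0 < mcoef n T := by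
  unfold mcoef
  positivity

lemma pB_pos (n : ℕ) {θ : ℝ} (h0 : 0 < θ) (h1 : θ < 1) (T : ℕ × ℕ × ℕ × ℕ) :
    0 < pB n θ T := by
  unfold pB
  have := mcoef_pos n T
  have : (0:ℝ) < 1 - θ := by linarith
  positivity

lemma zpow_split {θ : ℝ} (h0 : 0 < θ) (a b : ℕ) (e : ℤ) (h : (a : ℤ) = b + e) :
    θ ^ a = θ ^ b * θ ^ e := by
  have h1 : θ ^ a = θ ^ (a : ℤ) := (zpow_natCast θ a).symm
  rw [h1, h, zpow_add₀ h0.ne', zpow_natCast]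

lemma pA_eq (n : ℕ) {θ : ℝ} (h0 : 0 < θ) (h1 : θ < 1) (x y z t : ℕ) :
    pA n θ (x, y, z, t)
      = pB n θ (x, y, z, t) * (θ/(1-θ)) ^ (((y:ℤ) - z) - ((x:ℤ) - t)) := by
  have h1' : (0:ℝ) < 1 - θ := by linarith
  unfold pA pB
  dsimp only
  rw [div_zpow, div_eq_mul_inv, ← zpow_neg,
    zpow_split h0 (x+2*y+t) (2*x+y+z) (((y:ℤ) - z) - ((x:ℤ) - t)) (by push_cast; ring),
    zpow_split h1' (x+2*z+t) (y+z+2*t) (-((((y:ℤ) - z) - ((x:ℤ) - t)))) (by push_cast; ring)]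
  ring

lemma pB_symm (n : ℕ) (θ : ℝ) (x y z t : ℕ) :
    pB n θ (x, z, y, t) = pB n θ (x, y, z, t) := by
  unfold pB mcoef
  dsimp only
  rw [show 2*x+z+y = 2*x+y+z by ring, show z+y+2*t = y+z+2*t by ring]
  ring

lemma good_iff (n : ℕ) {θ w : ℝ} (hθ : 1/2 < θ) (hθ1 : θ < 1) (hw0 : 0 < w) (x y z t : ℕ) :
    goodTable θ w (x, y, z, t) ↔
      w * (pA n θ (x, y, z, t) + pA n θ (x, z, y, t))
        < (1-w) * (pB n θ (x, y, z, t) + pB n θ (x, z, y, t)) := by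
  have h0 : (0:ℝ) < θ := by linarith
  have hB := pB_pos n h0 hθ1 (x, y, z, t)
  set q := θ / (1 - θ)
  set e1 : ℤ := ((y:ℤ) - z) - ((x:ℤ) - t)
  set e2 : ℤ := ((z:ℤ) - y) - ((x:ℤ) - t)
  have key1 : w * (pA n θ (x, y, z, t) + pA n θ (x, z, y, t))
      = ((q ^ e1 + q ^ e2) * w) * pB n θ (x, y, z, t) := by
    rw [pA_eq n h0 hθ1 x y z t, pA_eq n h0 hθ1 x z y t, pB_symm]
    ring
  have key2 : (1-w) * (pB n θ (x, y, z, t) + pB n θ (x, z, y, t))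
      = (2 * (1-w)) * pB n θ (x, y, z, t) := by
    rw [pB_symm]; ring
  rw [key1, key2, mul_lt_mul_iff_of_pos_right hB]
  unfold goodTable
  dsimp only
  rw [lt_div_iff₀ hw0]

noncomputable def fT (n : ℕ) (w θ : ℝ) (r : ℕ × ℕ × ℕ × ℕ → Fin 2)
    (T : ℕ × ℕ × ℕ × ℕ) : ℝ :=
  if r T = 1 then w * pA n θ T else (1-w) * pB n θ T

lemma fin2_cases (a : Fin 2) : a = 0 ∨ a = 1 := by omega

lemma loss_eq (n : ℕ) (w θ : ℝ) (r : ℕ × ℕ × ℕ × ℕ → Fin 2) :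
    loss n w θ r = ∑ T ∈ tables n, fT n w θ r T := by
  unfold loss fT pA pB
  rw [Finset.sum_filter, Finset.sum_filter, Finset.mul_sum, Finset.mul_sum,
    ← Finset.sum_add_distrib]
  refine Finset.sum_congr rfl fun T _ => ?_
  rcases fin2_cases (r T) with h | h <;> simp [h]

lemma ruleStar_eq_one_iff (θ w : ℝ) (T : ℕ × ℕ × ℕ × ℕ) :
    ruleStar θ w T = 1 ↔ goodTable θ w T := by
  unfold ruleStar
  split <;> simp_all


/-- The rule whose positive set consists exactly of the good tables is admissible
(invariant under transposition and order-preserving), and it minimises the loss `L_w`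
among all rules invariant under transposition (in particular among admissible rules). -/
theorem ruleStar_admissible_and_optimal
    (n m : ℕ) (hm : 1 ≤ m) (hn : n = 2 * m + 1)
    (θ : ℝ) (hθ : 1/2 < θ) (hθ1 : θ < 1)
    (w : ℝ) (hw0 : 0 < w) (hw1 : w < 1) :
    (∀ x y z t : ℕ, x + y + z + t = n →
        ruleStar θ w (x, y, z, t) = ruleStar θ w (x, z, y, t)) ∧
    (∀ T S : ℕ × ℕ × ℕ × ℕ, tsum4 T = n → tsum4 S = n → tableLe T S →
        ruleStar θ w T ≤ ruleStar θ w S) ∧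
    (∀ r : ℕ × ℕ × ℕ × ℕ → Fin 2,
        (∀ x y z t : ℕ, x + y + z + t = n → r (x, y, z, t) = r (x, z, y, t)) →
        loss n w θ (ruleStar θ w) ≤ loss n w θ r) := by
  have hrs : ∀ x y z t : ℕ,
      ruleStar θ w (x, y, z, t) = ruleStar θ w (x, z, y, t) := by
    intro x y z t
    unfold ruleStar
    by_cases h : goodTable θ w (x, y, z, t)
    · rw [if_pos h, if_pos ((goodTable_swap θ w x y z t).mp h)]
    · rw [if_neg h, if_neg (fun h' => h ((goodTable_swap θ w x y z t).mpr h'))]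
  refine ⟨fun x y z t _ => hrs x y z t, ?_, ?_⟩
  · intro T S _ _ hle
    by_cases h : goodTable θ w T
    · have hS := good_le hθ hθ1 hle h
      unfold ruleStar
      rw [if_pos h, if_pos hS]
    · unfold ruleStar
      rw [if_neg h]
      exact Fin.zero_le _
  · intro r hsym
    have hkey : ∀ (r' : ℕ × ℕ × ℕ × ℕ → Fin 2),
        (∀ x y z t : ℕ, x + y + z + t = n → r' (x, y, z, t) = r' (x, z, y, t)) →
        2 * loss n w θ r' = ∑ T ∈ tables n, (fT n w θ r' T + fT n w θ r' (sw T)) := by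
      intro r' hsym'
      have h1 : loss n w θ r' = ∑ T ∈ tables n, fT n w θ r' T := loss_eq n w θ r'
      have h2 : ∑ T ∈ tables n, fT n w θ r' T
          = ∑ T ∈ tables n, fT n w θ r' (sw T) := reindex_sw _
      rw [h1, two_mul]
      nth_rewrite 2 [h2]
      rw [← Finset.sum_add_distrib]
    have e1 := hkey (ruleStar θ w) (fun x y z t _ => hrs x y z t)
    have e2 := hkey r hsym
    have h01 : ¬ ((0 : Fin 2) = 1) := by decide
    have hpt : ∀ T ∈ tables n,
        fT n w θ (ruleStar θ w) T + fT n w θ (ruleStar θ w) (sw T)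
          ≤ fT n w θ r T + fT n w θ r (sw T) := by
      intro T hT
      obtain ⟨x, y, z, t⟩ := T
      have hs : x + y + z + t = n := mem_tables.mp hT
      have hr : r (x, z, y, t) = r (x, y, z, t) := (hsym x y z t hs).symm
      have hr2 : ruleStar θ w (x, z, y, t) = ruleStar θ w (x, y, z, t) :=
        (hrs x y z t).symm
      have hswT : sw (x, y, z, t) = (x, z, y, t) := rfl
      rw [hswT]
      unfold fT
      rw [hr, hr2]
      by_cases hg : goodTable θ w (x, y, z, t)
      · have h1 : ruleStar θ w (x, y, z, t) = 1 :=
          (ruleStar_eq_one_iff θ w _).mpr hg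
        have hlt := (good_iff n hθ hθ1 hw0 x y z t).mp hg
        rw [h1, if_pos rfl, if_pos rfl]
        rcases fin2_cases (r (x, y, z, t)) with h | h
        · rw [h, if_neg h01, if_neg h01]
          linarith
        · rw [h, if_pos rfl, if_pos rfl]
      · have h1 : ruleStar θ w (x, y, z, t) = 0 := by
          unfold ruleStar; rw [if_neg hg]
        have hge : (1-w) * (pB n θ (x, y, z, t) + pB n θ (x, z, y, t))
            ≤ w * (pA n θ (x, y, z, t) + pA n θ (x, z, y, t)) :=
          not_lt.mp (fun h => hg ((good_iff n hθ hθ1 hw0 x y z t).mpr h))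
        rw [h1, if_neg h01, if_neg h01]
        rcases fin2_cases (r (x, y, z, t)) with h | h
        · rw [h, if_neg h01, if_neg h01]
        · rw [h, if_pos rfl, if_pos rfl]
          linarith
    have := Finset.sum_le_sum hpt
    rw [← e1, ← e2] at this
    linarith
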